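/- Let φ be as above and let Ψ ∈ F[x]^{2×2} be a matrix whose rows form a basis of ker(φ). Then det(Ψ) = c·Π(x) for some nonzero scalar c ∈ F. Conversely, if the rows of a matrix Φ ∈ F[x]^{2×2} lie in ker(φ) and det(Φ) = c·Π(x) for a nonzero c ∈ F, then the rows of Φ form a basis of ker(φ). -/

import Mathlib

open Polynomial

/-- Abstract core: if `K ≤ F[x]²` has two elements `u₀ u₁` whose "determinant"
is `Pr ≠ 0` and which generate `K`, then basis matrices of `K` are exactly the
matrices with rows in `K` and determinant a nonzero scalar multiple of `Pr`. -/
theorem stmt_3_aux {F : Type*} [Field F] (Pr : Polynomial F) (hPr0 : Pr ≠ 0)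
    (K : Submodule (Polynomial F) (Polynomial F × Polynomial F))
    (u₀ u₁ : Polynomial F × Polynomial F) (h₀ : u₀ ∈ K) (h₁ : u₁ ∈ K)
    (hdet : u₀.1 * u₁.2 - u₀.2 * u₁.1 = Pr)
    (hspan : ∀ z ∈ K, ∃ s k : Polynomial F, z = s • u₀ + k • u₁) :
    (∀ Ψ : Matrix (Fin 2) (Fin 2) (Polynomial F),
      (∃ b : Module.Basis (Fin 2) (Polynomial F) K,
        ∀ i, (b i : Polynomial F × Polynomial F) = (Ψ i 0, Ψ i 1)) →
      ∃ c : F, c ≠ 0 ∧ Ψ.det = C c * Pr) ∧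
    (∀ Φ : Matrix (Fin 2) (Fin 2) (Polynomial F),
      (∀ i, (Φ i 0, Φ i 1) ∈ K) →
      (∃ c : F, c ≠ 0 ∧ Φ.det = C c * Pr) →
      ∃ b : Module.Basis (Fin 2) (Polynomial F) K,
        ∀ i, (b i : Polynomial F × Polynomial F) = (Φ i 0, Φ i 1)) := by
  classical
  -- the family in K
  set v : Fin 2 → K := ![⟨u₀, h₀⟩, ⟨u₁, h₁⟩] with hv
  have hv0 : (v 0 : Polynomial F × Polynomial F) = u₀ := rfl
  have hv1 : (v 1 : Polynomial F × Polynomial F) = u₁ := rfl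
  -- linear independence
  have hli : LinearIndependent (Polynomial F) v := by
    have hli' : LinearIndependent (Polynomial F) (fun i => (v i : Polynomial F × Polynomial F)) := by
      rw [Fintype.linearIndependent_iff]
      intro g hg
      rw [Fin.sum_univ_two, hv0, hv1] at hg
      have e1 : g 0 * u₀.1 + g 1 * u₁.1 = 0 := congrArg Prod.fst hg
      have e2 : g 0 * u₀.2 + g 1 * u₁.2 = 0 := congrArg Prod.snd hg
      have h0 : g 0 * Pr = 0 := by
        linear_combination u₁.2 * e1 - u₁.1 * e2 - g 0 * hdet
      have h1 : g 1 * Pr = 0 := by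
        linear_combination u₀.1 * e2 - u₀.2 * e1 - g 1 * hdet
      intro i
      fin_cases i
      · exact (mul_eq_zero.mp h0).resolve_right hPr0
      · exact (mul_eq_zero.mp h1).resolve_right hPr0
    exact hli'.of_comp K.subtype
  -- spanning
  have hsp : ⊤ ≤ Submodule.span (Polynomial F) (Set.range v) := by
    intro z _
    obtain ⟨s, k, hz⟩ := hspan (z : Polynomial F × Polynomial F) z.2
    have : z = s • v 0 + k • v 1 := by
      apply Subtype.ext
      simpa [hv0, hv1] using hz
    rw [this]
    exact Submodule.add_mem _
      (Submodule.smul_mem _ _ (Submodule.subset_span ⟨0, rfl⟩))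
      (Submodule.smul_mem _ _ (Submodule.subset_span ⟨1, rfl⟩))
  set eb : Module.Basis (Fin 2) (Polynomial F) K := Module.Basis.mk hli hsp with heb
  have hebc : ∀ i, eb i = v i := fun i => by rw [heb, Module.Basis.coe_mk]
  -- key determinant computation
  have key : ∀ w : Fin 2 → K,
      (eb.toMatrix w).det * Pr =
        (w 0 : Polynomial F × Polynomial F).1 * (w 1 : Polynomial F × Polynomial F).2 - (w 0 : Polynomial F × Polynomial F).2 * (w 1 : Polynomial F × Polynomial F).1 := by
    intro w
    have hw : ∀ i, (w i : Polynomial F × Polynomial F) =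
        eb.repr (w i) 0 • u₀ + eb.repr (w i) 1 • u₁ := by
      intro i
      have hs := eb.sum_repr (w i)
      rw [Fin.sum_univ_two] at hs
      have := congrArg (Subtype.val : K → Polynomial F × Polynomial F) hs
      simpa [hebc, hv0, hv1] using this.symm
    have c1 : ∀ i, (w i : Polynomial F × Polynomial F).1 =
        eb.repr (w i) 0 * u₀.1 + eb.repr (w i) 1 * u₁.1 := by
      intro i; have := congrArg Prod.fst (hw i); simpa using this
    have c2 : ∀ i, (w i : Polynomial F × Polynomial F).2 =
        eb.repr (w i) 0 * u₀.2 + eb.repr (w i) 1 * u₁.2 := by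
      intro i; have := congrArg Prod.snd (hw i); simpa using this
    rw [Matrix.det_fin_two, Module.Basis.toMatrix_apply, Module.Basis.toMatrix_apply,
      Module.Basis.toMatrix_apply, Module.Basis.toMatrix_apply, c1 0, c1 1, c2 0, c2 1, ← hdet]
    ring
  constructor
  · -- basis ⇒ det = c • Pr
    rintro Ψ ⟨b, hb⟩
    have hu : IsUnit (eb.toMatrix b).det := by
      have := eb.isUnit_det b
      rwa [Module.Basis.det_apply] at this
    obtain ⟨c, hc, hCc⟩ := Polynomial.isUnit_iff.mp hu
    refine ⟨c, hc.ne_zero, ?_⟩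
    have hk := key b
    have hb1 : ∀ i, (b i : Polynomial F × Polynomial F).1 = Ψ i 0 := fun i => by rw [hb i]
    have hb2 : ∀ i, (b i : Polynomial F × Polynomial F).2 = Ψ i 1 := fun i => by rw [hb i]
    rw [hb1 0, hb1 1, hb2 0, hb2 1, ← hCc] at hk
    rw [Matrix.det_fin_two, ← hk]
  · -- rows in K with det = c • Pr ⇒ basis
    rintro Φ hmem ⟨c, hc, hdΦ⟩
    set w : Fin 2 → K := fun i => ⟨(Φ i 0, Φ i 1), hmem i⟩ with hwdef
    have hk := key w
    have hdet' : (eb.toMatrix w).det = C c := by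
      apply mul_right_cancel₀ hPr0
      rw [hk]
      show Φ 0 0 * Φ 1 1 - Φ 0 1 * Φ 1 0 = C c * Pr
      rw [← Matrix.det_fin_two, hdΦ]
    have hu : IsUnit (eb.det w) := by
      rw [Module.Basis.det_apply, hdet']
      exact (isUnit_C).mpr hc.isUnit
    obtain ⟨hli', hsp'⟩ := (Module.Basis.is_basis_iff_det eb).mpr hu
    refine ⟨Module.Basis.mk hli' hsp'.ge, fun i => ?_⟩
    rw [Module.Basis.coe_mk]

/-- A matrix whose rows form a basis of `ker φ` has determinant `c·Π` for some
nonzero `c ∈ F`; conversely, a matrix whose rows lie in `ker φ` and whose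
determinant is a nonzero scalar multiple of `Π` is a basis matrix of `ker φ`. -/
theorem stmt_3 {F : Type*} [Field F] [DecidableEq F] (ρ : ℕ) (x : Fin ρ → F)
    (hx : Function.Injective x) (D G : Polynomial F)
    (Pr : Polynomial F) (hPr : Pr = ∏ i : Fin ρ, (X - C (x i)))
    (hcop : IsCoprime (EuclideanDomain.gcd D G) Pr)
    (φ : (Polynomial F × Polynomial F) →ₗ[Polynomial F]
          (Polynomial F ⧸ Ideal.span {Pr}))
    (hφ : ∀ p : Polynomial F × Polynomial F,
      φ p = Ideal.Quotient.mk (Ideal.span {Pr}) (D * p.1 + G * p.2)) :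
    (∀ Ψ : Matrix (Fin 2) (Fin 2) (Polynomial F),
      (∃ b : Module.Basis (Fin 2) (Polynomial F) (LinearMap.ker φ),
        ∀ i, (b i : Polynomial F × Polynomial F) = (Ψ i 0, Ψ i 1)) →
      ∃ c : F, c ≠ 0 ∧ Ψ.det = C c * Pr) ∧
    (∀ Φ : Matrix (Fin 2) (Fin 2) (Polynomial F),
      (∀ i, (Φ i 0, Φ i 1) ∈ LinearMap.ker φ) →
      (∃ c : F, c ≠ 0 ∧ Φ.det = C c * Pr) →
      ∃ b : Module.Basis (Fin 2) (Polynomial F) (LinearMap.ker φ),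
        ∀ i, (b i : Polynomial F × Polynomial F) = (Φ i 0, Φ i 1)) := by
  have hmonic : Pr.Monic := by
    rw [hPr]; exact monic_prod_of_monic _ _ fun i _ => monic_X_sub_C (x i)
  have hPr0 : Pr ≠ 0 := hmonic.ne_zero
  have hmem : ∀ z : Polynomial F × Polynomial F,
      z ∈ LinearMap.ker φ ↔ Pr ∣ (D * z.1 + G * z.2) := by
    intro z
    rw [LinearMap.mem_ker, hφ, Ideal.Quotient.eq_zero_iff_mem, Ideal.mem_span_singleton]
  set g : Polynomial F := EuclideanDomain.gcd D G with hg
  by_cases hg0 : g = 0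
  · -- D = G = 0, Pr is a unit, hence Pr = 1 and ker φ = ⊤
    obtain ⟨hD, hG⟩ := EuclideanDomain.gcd_eq_zero_iff.mp hg0
    have hPr1 : Pr = 1 := hmonic.eq_one_of_isUnit (isCoprime_zero_left.mp (hg0 ▸ hcop))
    refine stmt_3_aux Pr hPr0 (LinearMap.ker φ) (1, 0) (0, 1) ?_ ?_ ?_ ?_
    · rw [hmem]; rw [hPr1]; exact one_dvd _
    · rw [hmem]; rw [hPr1]; exact one_dvd _
    · simp [hPr1]
    · intro z _
      refine ⟨z.1, z.2, ?_⟩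
      rw [Prod.ext_iff]
      constructor <;> simp
  · -- general case: g ≠ 0
    have hdvdD : g ∣ D := EuclideanDomain.gcd_dvd_left D G
    have hdvdG : g ∣ G := EuclideanDomain.gcd_dvd_right D G
    set d : Polynomial F := D / g with hdd
    set n : Polynomial F := G / g with hnn
    have hd : g * d = D := EuclideanDomain.mul_div_cancel' hg0 hdvdD
    have hn : g * n = G := EuclideanDomain.mul_div_cancel' hg0 hdvdG
    set p : Polynomial F := EuclideanDomain.gcdA D G with hp
    set q : Polynomial F := EuclideanDomain.gcdB D G with hq
    have hbez : g = D * p + G * q := EuclideanDomain.gcd_eq_gcd_ab D G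
    have hbez' : d * p + n * q = 1 := by
      apply mul_left_cancel₀ hg0
      rw [mul_one]
      linear_combination p * hd + q * hn - hbez
    refine stmt_3_aux Pr hPr0 (LinearMap.ker φ) (n, -d) (p * Pr, q * Pr) ?_ ?_ ?_ ?_
    · rw [hmem]
      have : D * n + G * -d = 0 := by linear_combination (-n) * hd + d * hn
      simp only [this]
      exact dvd_zero _
    · rw [hmem]
      exact ⟨g, by linear_combination (-Pr) * hbez⟩
    · show n * (q * Pr) - -d * (p * Pr) = Pr
      linear_combination Pr * hbez'
    · intro z hz
      obtain ⟨W, N⟩ := z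
      rw [hmem] at hz
      obtain ⟨t, ht0⟩ := hz
      have ht : D * W + G * N = Pr * t := ht0
      have hgt : g ∣ t := by
        refine hcop.dvd_of_dvd_mul_left ?_
        exact ⟨d * W + n * N, by linear_combination -ht - W * hd - N * hn⟩
      obtain ⟨k, hk⟩ := hgt
      have hk2 : d * W + n * N = Pr * k := by
        apply mul_left_cancel₀ hg0
        linear_combination W * hd + N * hn + ht + Pr * hk
      refine ⟨q * (W - k * (p * Pr)) - p * (N - k * (q * Pr)), k, ?_⟩
      have e1 : W = (q * (W - k * (p * Pr)) - p * (N - k * (q * Pr))) * n + k * (p * Pr) := by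
        linear_combination p * hk2 - W * hbez'
      have e2 : N = (q * (W - k * (p * Pr)) - p * (N - k * (q * Pr))) * (-d) + k * (q * Pr) := by
        linear_combination q * hk2 - N * hbez'
      rw [Prod.ext_iff]
      refine ⟨?_, ?_⟩
      · simpa using e1
      · simpa using e2
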